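/- Let f : (0,π) → ℝ be defined by f(θ) = e^{-w(θ)} = 2/(1 - cos θ). Then (1/f)·(1 - Δ̊ log f) = 0 on (0, π), where Δ̊ log f means (log f)'' + cot(θ)·(log f)'. In particular the null expansion tr χ̃ = (2/f)(1 - Δ̊ log f) of the corresponding section of the lightcone vanishes identically. -/

import Mathlib

open Real

private lemma F_hasDerivAt {θ : ℝ} (h : Real.cos θ ≠ 1) :
    HasDerivAt (fun θ : ℝ => Real.log (2 / (1 - Real.cos θ)))
      (-Real.sin θ / (1 - Real.cos θ)) θ := by
  have hne : (1 : ℝ) - Real.cos θ ≠ 0 := by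
    intro h0; apply h; linarith
  have h1 : HasDerivAt (fun θ : ℝ => 1 - Real.cos θ) (Real.sin θ) θ := by
    simpa [Pi.sub_def] using (hasDerivAt_const θ (1 : ℝ)).sub (Real.hasDerivAt_cos θ)
  have h2 : HasDerivAt (fun θ : ℝ => 2 / (1 - Real.cos θ))
      (-(2 * Real.sin θ) / (1 - Real.cos θ) ^ 2) θ := by
    simpa [Pi.div_def] using (hasDerivAt_const θ (2 : ℝ)).div h1 hne
  have h3 : (2 : ℝ) / (1 - Real.cos θ) ≠ 0 := div_ne_zero two_ne_zero hne
  have := h2.log h3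
  convert this using 1
  field_simp

private lemma isOpenS : IsOpen {x : ℝ | Real.cos x ≠ 1} := by
  have : {x : ℝ | Real.cos x ≠ 1} = {x : ℝ | Real.cos x = 1}ᶜ := rfl
  rw [this]
  exact (isClosed_eq Real.continuous_cos continuous_const).isOpen_compl

private lemma derivF_eq {θ : ℝ} (h : Real.cos θ ≠ 1) :
    deriv (fun θ : ℝ => Real.log (2 / (1 - Real.cos θ))) θ
      = -Real.sin θ / (1 - Real.cos θ) := (F_hasDerivAt h).deriv

private lemma deriv2F_eq {θ : ℝ} (h : Real.cos θ ≠ 1) :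
    deriv (deriv (fun θ : ℝ => Real.log (2 / (1 - Real.cos θ)))) θ
      = 1 / (1 - Real.cos θ) := by
  have hne : (1 : ℝ) - Real.cos θ ≠ 0 := by intro h0; apply h; linarith
  have hev : deriv (fun θ : ℝ => Real.log (2 / (1 - Real.cos θ)))
      =ᶠ[nhds θ] (fun x => -Real.sin x / (1 - Real.cos x)) := by
    filter_upwards [isOpenS.mem_nhds h] with x hx
    exact derivF_eq hx
  rw [hev.deriv_eq]
  have h1 : HasDerivAt (fun x : ℝ => -Real.sin x) (-Real.cos θ) θ :=
    (Real.hasDerivAt_sin θ).neg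
  have h2 : HasDerivAt (fun x : ℝ => 1 - Real.cos x) (Real.sin θ) θ := by
    simpa [Pi.sub_def] using (hasDerivAt_const θ (1 : ℝ)).sub (Real.hasDerivAt_cos θ)
  have h3 := h1.div h2 hne
  rw [show (fun x : ℝ => -Real.sin x / (1 - Real.cos x)) = ((fun x => -Real.sin x) / fun x => 1 - Real.cos x) from rfl, h3.deriv]
  have hsq := Real.sin_sq_add_cos_sq θ
  field_simp
  nlinarith [sq_nonneg (1 - Real.cos θ)]

theorem null_expansion_of_stereographic_section_vanishes :
    ∀ θ ∈ Set.Ioo (0 : ℝ) π,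
      (1 / ((fun θ : ℝ => 2 / (1 - Real.cos θ)) θ)) *
        (1 - (deriv (deriv (fun θ : ℝ => Real.log (2 / (1 - Real.cos θ)))) θ
          + Real.cos θ / Real.sin θ *
            deriv (fun θ : ℝ => Real.log (2 / (1 - Real.cos θ))) θ)) = 0 ∧
      (2 / ((fun θ : ℝ => 2 / (1 - Real.cos θ)) θ)) *
        (1 - (deriv (deriv (fun θ : ℝ => Real.log (2 / (1 - Real.cos θ)))) θ
          + Real.cos θ / Real.sin θ *
            deriv (fun θ : ℝ => Real.log (2 / (1 - Real.cos θ))) θ)) = 0 := by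
  intro θ hθ
  have hs : Real.sin θ > 0 := Real.sin_pos_of_pos_of_lt_pi hθ.1 hθ.2
  have hc : Real.cos θ < 1 := by
    rcases lt_or_eq_of_le (Real.cos_le_one θ) with h | h
    · exact h
    · exfalso
      have := Real.sin_sq_add_cos_sq θ
      nlinarith
  have hcne : Real.cos θ ≠ 1 := ne_of_lt hc
  have hne : (1 : ℝ) - Real.cos θ ≠ 0 := by intro h0; apply hcne; linarith
  rw [derivF_eq hcne, deriv2F_eq hcne]
  have key : (1 - (1 / (1 - Real.cos θ)
      + Real.cos θ / Real.sin θ * (-Real.sin θ / (1 - Real.cos θ)))) = 0 := by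
    field_simp
    ring
  constructor <;> rw [key] <;> ring
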